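/- The edges {u₀u₁, u₀v₀, v₀w₀}, {v₀v₁, u₀w₀, w₀w₁}, and for each 2 ≤ i ≤ q the triples {u₀u_i, v₀v_i, w₀w_i}, together partition the edge set of the graph G' from the construction, and each of these q+1 triples of edges forms an acyclic subgraph (a forest) on U ∪ V ∪ W. -/

import Mathlib

/-- The graph `G'` on vertex set `Fin 3 × Fin (q+1)`: the triangle on
`u₀ = (0,0)`, `v₀ = (1,0)`, `w₀ = (2,0)` plus the pendant edges
`u₀uᵢ`, `v₀vᵢ`, `w₀wᵢ` for `1 ≤ i ≤ q`. -/
def trioGraph (q : ℕ) : SimpleGraph (Fin 3 × Fin (q + 1)) :=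
  SimpleGraph.fromEdgeSet
    ({s(((0 : Fin 3), (0 : Fin (q + 1))), ((1 : Fin 3), (0 : Fin (q + 1)))),
      s(((1 : Fin 3), (0 : Fin (q + 1))), ((2 : Fin 3), (0 : Fin (q + 1)))),
      s(((0 : Fin 3), (0 : Fin (q + 1))), ((2 : Fin 3), (0 : Fin (q + 1))))} ∪
     {e | ∃ i : Fin (q + 1), i ≠ 0 ∧ ∃ j : Fin 3, e = s((j, (0 : Fin (q + 1))), (j, i))})

/-- The triple of edges assigned to index `i`:
`i = 0 ↦ {u₀u₁, u₀v₀, v₀w₀}`, `i = 1 ↦ {v₀v₁, u₀w₀, w₀w₁}`, and for `i ≥ 2`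
the triple `{u₀uᵢ, v₀vᵢ, w₀wᵢ}`. -/
def tripEdges (q : ℕ) (i : Fin (q + 1)) : Set (Sym2 (Fin 3 × Fin (q + 1))) :=
  if i = 0 then
    {s(((0 : Fin 3), (0 : Fin (q + 1))), ((0 : Fin 3), (1 : Fin (q + 1)))),
     s(((0 : Fin 3), (0 : Fin (q + 1))), ((1 : Fin 3), (0 : Fin (q + 1)))),
     s(((1 : Fin 3), (0 : Fin (q + 1))), ((2 : Fin 3), (0 : Fin (q + 1))))}
  else if i = 1 then
    {s(((1 : Fin 3), (0 : Fin (q + 1))), ((1 : Fin 3), (1 : Fin (q + 1)))),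
     s(((0 : Fin 3), (0 : Fin (q + 1))), ((2 : Fin 3), (0 : Fin (q + 1)))),
     s(((2 : Fin 3), (0 : Fin (q + 1))), ((2 : Fin 3), (1 : Fin (q + 1))))}
  else
    {s(((0 : Fin 3), (0 : Fin (q + 1))), ((0 : Fin 3), i)),
     s(((1 : Fin 3), (0 : Fin (q + 1))), ((1 : Fin 3), i)),
     s(((2 : Fin 3), (0 : Fin (q + 1))), ((2 : Fin 3), i))}

open SimpleGraph

lemma trip0 (q : ℕ) : tripEdges q 0 =
    {s(((0 : Fin 3), (0 : Fin (q + 1))), ((0 : Fin 3), (1 : Fin (q + 1)))),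
     s(((0 : Fin 3), (0 : Fin (q + 1))), ((1 : Fin 3), (0 : Fin (q + 1)))),
     s(((1 : Fin 3), (0 : Fin (q + 1))), ((2 : Fin 3), (0 : Fin (q + 1))))} := if_pos rfl

lemma finOneNeZero (q : ℕ) (hq : 2 ≤ q) : (1 : Fin (q+1)) ≠ 0 := by
  simp [Fin.ext_iff, Fin.val_one']; omega

lemma trip1 (q : ℕ) (hq : 2 ≤ q) : tripEdges q 1 =
    {s(((1 : Fin 3), (0 : Fin (q + 1))), ((1 : Fin 3), (1 : Fin (q + 1)))),
     s(((0 : Fin 3), (0 : Fin (q + 1))), ((2 : Fin 3), (0 : Fin (q + 1)))),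
     s(((2 : Fin 3), (0 : Fin (q + 1))), ((2 : Fin 3), (1 : Fin (q + 1))))} := by
  rw [tripEdges, if_neg (finOneNeZero q hq), if_pos rfl]

lemma trip2 (q : ℕ) (i : Fin (q+1)) (h0 : i ≠ 0) (h1 : i ≠ 1) : tripEdges q i =
    {s(((0 : Fin 3), (0 : Fin (q + 1))), ((0 : Fin 3), i)),
     s(((1 : Fin 3), (0 : Fin (q + 1))), ((1 : Fin 3), i)),
     s(((2 : Fin 3), (0 : Fin (q + 1))), ((2 : Fin 3), i))} := by
  rw [tripEdges, if_neg h0, if_neg h1]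

lemma notDiagPendant (q : ℕ) (j : Fin 3) (k : Fin (q+1)) (hk : k ≠ 0) :
    ¬ (s((j, (0 : Fin (q+1))), (j, k))).IsDiag := by
  simp [Prod.ext_iff]; exact fun h => absurd h.symm hk

lemma acyclic_of_no_triangle {V : Type*} [DecidableEq V] {G : SimpleGraph V}
    (e1 e2 e3 : Sym2 V) (h3 : G.edgeSet ⊆ {e1, e2, e3})
    (htri : ∀ a b c : V, G.Adj a b → G.Adj b c → G.Adj c a → False) : G.IsAcyclic := by
  intro v c hc
  have hlen3 : 3 ≤ c.length := hc.three_le_length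
  have hnodup : c.edges.Nodup := hc.edges_nodup
  have hsub : ∀ e ∈ c.edges, e ∈ ({e1, e2, e3} : Finset (Sym2 V)) := by
    intro e he
    have := h3 (c.edges_subset_edgeSet he)
    simpa using this
  have hle : c.edges.length ≤ 3 := by
    have h1 : c.edges.toFinset ⊆ ({e1, e2, e3} : Finset (Sym2 V)) := by
      intro e he; exact hsub e (List.mem_toFinset.mp he)
    have h2 := Finset.card_le_card h1
    have h4 : ({e1, e2, e3} : Finset (Sym2 V)).card ≤ 3 :=
      (Finset.card_insert_le _ _).trans (by have := Finset.card_insert_le e2 {e3}; simp only [Finset.card_singleton] at this; omega)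
    rw [List.toFinset_card_of_nodup hnodup] at h2
    omega
  rw [c.length_edges] at hle
  have hlen : c.length = 3 := le_antisymm hle hlen3
  cases c with
  | nil => simp at hlen
  | cons h p =>
    cases p with
    | nil => simp at hlen
    | cons h2 p2 =>
      cases p2 with
      | nil => simp at hlen
      | cons h3' p3 =>
        cases p3 with
        | nil => exact htri _ _ _ h h2 h3'
        | cons h4 p4 => simp [SimpleGraph.Walk.length_cons] at hlen

/-- The `q+1` triples of edges partition the edge set of `G'`, and each triple forms an
acyclic subgraph (a forest) on the whole vertex set. -/
theorem stmt12 (q : ℕ) (hq : 2 ≤ q) :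
    (⋃ i, tripEdges q i) = (trioGraph q).edgeSet ∧
    (Pairwise fun i j => Disjoint (tripEdges q i) (tripEdges q j)) ∧
    (∀ i, (SimpleGraph.fromEdgeSet (tripEdges q i)).IsAcyclic) := by
  have h10 : (1 : Fin (q+1)) ≠ 0 := finOneNeZero q hq
  have hmod : 1 % (q + 1) = 1 := Nat.mod_eq_of_lt (by omega)
  have v1 : ((1 : Fin (q+1)) : ℕ) = 1 := by rw [Fin.val_one']; exact hmod
  have v2 : ((2 : Fin 3) : ℕ) = 2 := rfl
  refine ⟨?_, ?_, ?_⟩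
  · apply Set.eq_of_subset_of_subset
    · intro e he
      obtain ⟨i, hi⟩ := Set.mem_iUnion.mp he
      rw [trioGraph, edgeSet_fromEdgeSet]
      rcases eq_or_ne i 0 with rfl | hi0
      · rw [trip0] at hi
        rcases hi with rfl | rfl | rfl
        · exact ⟨Or.inr ⟨1, h10, 0, rfl⟩, notDiagPendant q 0 1 h10⟩
        · exact ⟨Or.inl (Or.inl rfl), by simp [Prod.ext_iff, Fin.ext_iff]⟩
        · exact ⟨Or.inl (Or.inr (Or.inl rfl)), by simp [Prod.ext_iff, Fin.ext_iff]⟩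
      rcases eq_or_ne i 1 with rfl | hi1
      · rw [trip1 q hq] at hi
        rcases hi with rfl | rfl | rfl
        · exact ⟨Or.inr ⟨1, h10, 1, rfl⟩, notDiagPendant q 1 1 h10⟩
        · exact ⟨Or.inl (Or.inr (Or.inr rfl)), by simp [Prod.ext_iff, Fin.ext_iff]⟩
        · exact ⟨Or.inr ⟨1, h10, 2, rfl⟩, notDiagPendant q 2 1 h10⟩
      · rw [trip2 q i hi0 hi1] at hi
        rcases hi with rfl | rfl | rfl
        · exact ⟨Or.inr ⟨i, hi0, 0, rfl⟩, notDiagPendant q 0 i hi0⟩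
        · exact ⟨Or.inr ⟨i, hi0, 1, rfl⟩, notDiagPendant q 1 i hi0⟩
        · exact ⟨Or.inr ⟨i, hi0, 2, rfl⟩, notDiagPendant q 2 i hi0⟩
    · intro e he
      rw [trioGraph, edgeSet_fromEdgeSet] at he
      obtain ⟨hmem, -⟩ := he
      rcases hmem with (rfl | rfl | rfl) | ⟨i, hi0, j, rfl⟩
      · exact Set.mem_iUnion.mpr ⟨0, by rw [trip0]; right; left; rfl⟩
      · exact Set.mem_iUnion.mpr ⟨0, by rw [trip0]; right; right; rfl⟩
      · exact Set.mem_iUnion.mpr ⟨1, by rw [trip1 q hq]; right; left; rfl⟩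
      · rcases eq_or_ne i 1 with rfl | hi1
        · fin_cases j
          · exact Set.mem_iUnion.mpr ⟨0, by rw [trip0]; left; rfl⟩
          · exact Set.mem_iUnion.mpr ⟨1, by rw [trip1 q hq]; left; rfl⟩
          · exact Set.mem_iUnion.mpr ⟨1, by rw [trip1 q hq]; right; right; rfl⟩
        · refine Set.mem_iUnion.mpr ⟨i, ?_⟩
          rw [trip2 q i hi0 hi1]
          fin_cases j
          · left; rfl
          · right; left; rfl
          · right; right; rfl
  · intro i j hij
    rw [Set.disjoint_left]
    have hij' : i.val ≠ j.val := fun h => hij (Fin.ext h)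
    have hval0 : ∀ k : Fin (q+1), k ≠ 0 → k.val ≠ 0 := fun k hk h => hk (Fin.ext h)
    have hval1 : ∀ k : Fin (q+1), k ≠ 1 → k.val ≠ 1 := fun k hk h =>
      hk (Fin.ext (by rw [Fin.val_one', hmod]; exact h))
    rcases eq_or_ne i 0 with rfl | hi0
    · rcases eq_or_ne j 0 with rfl | hj0
      · exact absurd rfl hij
      rcases eq_or_ne j 1 with rfl | hj1
      · intro e he hf
        rw [trip0] at he; rw [trip1 q hq] at hf
        rcases he with rfl | rfl | rfl <;>
          simp only [Set.mem_insert_iff, Set.mem_singleton_iff, Sym2.eq_iff,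
            Prod.mk.injEq, Fin.ext_iff, Fin.val_zero, Fin.val_one, Fin.val_one', v1, v2] at hf <;> omega
      · intro e he hf
        have hj0' := hval0 j hj0; have hj1' := hval1 j hj1
        rw [trip0] at he; rw [trip2 q j hj0 hj1] at hf
        rcases he with rfl | rfl | rfl <;>
          simp only [Set.mem_insert_iff, Set.mem_singleton_iff, Sym2.eq_iff,
            Prod.mk.injEq, Fin.ext_iff, Fin.val_zero, Fin.val_one, Fin.val_one', v1, v2] at hf <;> omega
    rcases eq_or_ne i 1 with rfl | hi1
    · rcases eq_or_ne j 0 with rfl | hj0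
      · intro e he hf
        rw [trip1 q hq] at he; rw [trip0] at hf
        rcases he with rfl | rfl | rfl <;>
          simp only [Set.mem_insert_iff, Set.mem_singleton_iff, Sym2.eq_iff,
            Prod.mk.injEq, Fin.ext_iff, Fin.val_zero, Fin.val_one, Fin.val_one', v1, v2] at hf <;> omega
      rcases eq_or_ne j 1 with rfl | hj1
      · exact absurd rfl hij
      · intro e he hf
        have hj0' := hval0 j hj0; have hj1' := hval1 j hj1
        rw [trip1 q hq] at he; rw [trip2 q j hj0 hj1] at hf
        rcases he with rfl | rfl | rfl <;>
          simp only [Set.mem_insert_iff, Set.mem_singleton_iff, Sym2.eq_iff,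
            Prod.mk.injEq, Fin.ext_iff, Fin.val_zero, Fin.val_one, Fin.val_one', v1, v2] at hf <;> omega
    · have hi0' := hval0 i hi0; have hi1' := hval1 i hi1
      rcases eq_or_ne j 0 with rfl | hj0
      · intro e he hf
        rw [trip2 q i hi0 hi1] at he; rw [trip0] at hf
        rcases he with rfl | rfl | rfl <;>
          simp only [Set.mem_insert_iff, Set.mem_singleton_iff, Sym2.eq_iff,
            Prod.mk.injEq, Fin.ext_iff, Fin.val_zero, Fin.val_one, Fin.val_one', v1, v2] at hf <;> omega
      rcases eq_or_ne j 1 with rfl | hj1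
      · intro e he hf
        rw [trip2 q i hi0 hi1] at he; rw [trip1 q hq] at hf
        rcases he with rfl | rfl | rfl <;>
          simp only [Set.mem_insert_iff, Set.mem_singleton_iff, Sym2.eq_iff,
            Prod.mk.injEq, Fin.ext_iff, Fin.val_zero, Fin.val_one, Fin.val_one', v1, v2] at hf <;> omega
      · intro e he hf
        have hj0' := hval0 j hj0; have hj1' := hval1 j hj1
        rw [trip2 q i hi0 hi1] at he; rw [trip2 q j hj0 hj1] at hf
        rcases he with rfl | rfl | rfl <;>
          simp only [Set.mem_insert_iff, Set.mem_singleton_iff, Sym2.eq_iff,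
            Prod.mk.injEq, Fin.ext_iff, Fin.val_zero, Fin.val_one, Fin.val_one', v1, v2] at hf <;> omega
  · intro i
    rcases eq_or_ne i 0 with rfl | hi0
    · refine acyclic_of_no_triangle
        (s(((0 : Fin 3), (0 : Fin (q + 1))), ((0 : Fin 3), (1 : Fin (q + 1)))))
        (s(((0 : Fin 3), (0 : Fin (q + 1))), ((1 : Fin 3), (0 : Fin (q + 1)))))
        (s(((1 : Fin 3), (0 : Fin (q + 1))), ((2 : Fin 3), (0 : Fin (q + 1))))) ?_ ?_
      · rw [edgeSet_fromEdgeSet, trip0]; exact Set.diff_subset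
      · intro a b c hab hbc hca
        obtain ⟨a1, a2⟩ := a; obtain ⟨b1, b2⟩ := b; obtain ⟨c1, c2⟩ := c
        simp only [trip0, fromEdgeSet_adj, Set.mem_insert_iff,
          Set.mem_singleton_iff, Sym2.eq_iff, Prod.mk.injEq, ne_eq, Fin.ext_iff,
          Fin.val_zero, Fin.val_one, Fin.val_one', v1, v2] at hab hbc hca
        omega
    rcases eq_or_ne i 1 with rfl | hi1
    · refine acyclic_of_no_triangle
        (s(((1 : Fin 3), (0 : Fin (q + 1))), ((1 : Fin 3), (1 : Fin (q + 1)))))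
        (s(((0 : Fin 3), (0 : Fin (q + 1))), ((2 : Fin 3), (0 : Fin (q + 1)))))
        (s(((2 : Fin 3), (0 : Fin (q + 1))), ((2 : Fin 3), (1 : Fin (q + 1))))) ?_ ?_
      · rw [edgeSet_fromEdgeSet, trip1 q hq]; exact Set.diff_subset
      · intro a b c hab hbc hca
        obtain ⟨a1, a2⟩ := a; obtain ⟨b1, b2⟩ := b; obtain ⟨c1, c2⟩ := c
        simp only [trip1 q hq, fromEdgeSet_adj, Set.mem_insert_iff,
          Set.mem_singleton_iff, Sym2.eq_iff, Prod.mk.injEq, ne_eq, Fin.ext_iff,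
          Fin.val_zero, Fin.val_one, Fin.val_one', v1, v2] at hab hbc hca
        omega
    · refine acyclic_of_no_triangle
        (s(((0 : Fin 3), (0 : Fin (q + 1))), ((0 : Fin 3), i)))
        (s(((1 : Fin 3), (0 : Fin (q + 1))), ((1 : Fin 3), i)))
        (s(((2 : Fin 3), (0 : Fin (q + 1))), ((2 : Fin 3), i))) ?_ ?_
      · rw [edgeSet_fromEdgeSet, trip2 q i hi0 hi1]; exact Set.diff_subset
      · intro a b c hab hbc hca
        obtain ⟨a1, a2⟩ := a; obtain ⟨b1, b2⟩ := b; obtain ⟨c1, c2⟩ := c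
        simp only [trip2 q i hi0 hi1, fromEdgeSet_adj, Set.mem_insert_iff,
          Set.mem_singleton_iff, Sym2.eq_iff, Prod.mk.injEq, ne_eq, Fin.ext_iff,
          Fin.val_zero, Fin.val_one, Fin.val_one', v1, v2] at hab hbc hca
        omega
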